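/- Let X be a G-valued random variable and S a subset of G with P(X in S) >= 1/2. Then for any G-valued random variable Y with finite entropy, log|S| >= H(Y) - 4 d[X;Y] - 2 log 2. -/

import Mathlib

open scoped BigOperators Pointwise
noncomputable section

/-- A finitely supported probability mass function. -/
def IsPMF {α : Type*} (p : α → ℝ) : Prop :=
  (∀ x, 0 ≤ p x) ∧ (Function.support p).Finite ∧ ∑ᶠ x, p x = 1

/-- Shannon entropy of a pmf. -/
def ent {α : Type*} (p : α → ℝ) : ℝ := ∑ᶠ x, -(p x * Real.log (p x))

/-- Convolution of pmfs: the distribution of the sum of independent random variables. -/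
def conv {G : Type*} [AddCommGroup G] (p q : G → ℝ) : G → ℝ :=
  fun z => ∑ᶠ x, p x * q (z - x)

/-- Distribution of the negation. -/
def negp {G : Type*} [AddCommGroup G] (p : G → ℝ) : G → ℝ := fun x => p (-x)

/-- Entropic Ruzsa distance between (the distributions of) two random variables. -/
def rdist {G : Type*} [AddCommGroup G] (p q : G → ℝ) : ℝ :=
  ent (conv p (negp q)) - ent p / 2 - ent q / 2

/-- Distribution of the sum of `n` iid copies. -/
def iterConv {G : Type*} [AddCommGroup G] (p : G → ℝ) : ℕ → G → ℝ
  | 0 => fun x => Set.indicator ({0} : Set G) (fun _ => (1 : ℝ)) x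
  | n + 1 => conv (iterConv p n) p

section AuxPFR
open Real Function
open scoped Classical
set_option linter.unusedSectionVars false

variable {α : Type*} {G : Type*} [AddCommGroup G]

lemma ent_eq_finsum (f : α → ℝ) : ent f = ∑ᶠ x, Real.negMulLog (f x) := by
  unfold ent; congr 1; funext x; simp [Real.negMulLog, neg_mul]

lemma ent_eq_sum {f : α → ℝ} {T : Finset α} (h : Function.support f ⊆ ↑T) :
    ent f = ∑ x ∈ T, Real.negMulLog (f x) := by
  rw [ent_eq_finsum]
  refine finsum_eq_sum_of_support_subset _ ?_
  intro x hx
  refine h ?_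
  simp only [Function.mem_support] at hx ⊢
  intro h0
  exact hx (by simp [h0, Real.negMulLog])

lemma IsPMF.sum_one {f : α → ℝ} (hf : IsPMF f) {T : Finset α}
    (h : Function.support f ⊆ ↑T) : ∑ x ∈ T, f x = 1 := by
  rw [← finsum_eq_sum_of_support_subset _ h]; exact hf.2.2

lemma conv_negp_apply (f q : G → ℝ) (z : G) :
    conv f (negp q) z = ∑ᶠ x, f x * q (x - z) := by
  unfold conv negp; congr 1; funext x; rw [neg_sub]

lemma conv_negp_eq_sum {f q : G → ℝ} {T : Finset G} (h : Function.support f ⊆ ↑T) (z : G) :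
    conv f (negp q) z = ∑ x ∈ T, f x * q (x - z) := by
  rw [conv_negp_apply]
  refine finsum_eq_sum_of_support_subset _ ?_
  intro x hx; refine h ?_
  simp only [Function.mem_support] at hx ⊢
  intro h0; exact hx (by simp [h0])

lemma conv_negp_apply' (f q : G → ℝ) (z : G) :
    conv f (negp q) z = ∑ᶠ y, q y * f (z + y) := by
  rw [conv_negp_apply]
  refine (finsum_eq_of_bijective (fun y => z + y) (Equiv.addLeft z).bijective ?_).symm
  intro y
  simp [mul_comm]

lemma conv_negp_eq_sum' {f q : G → ℝ} {T : Finset G} (h : Function.support q ⊆ ↑T) (z : G) :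
    conv f (negp q) z = ∑ y ∈ T, q y * f (z + y) := by
  rw [conv_negp_apply']
  refine finsum_eq_sum_of_support_subset _ ?_
  intro y hy; refine h ?_
  simp only [Function.mem_support] at hy ⊢
  intro h0; exact hy (by simp [h0])

lemma conv_nonneg' {f g : G → ℝ} (hf : ∀ x, 0 ≤ f x) (hg : ∀ x, 0 ≤ g x) (z : G) :
    0 ≤ conv f g z := finsum_nonneg fun x => mul_nonneg (hf x) (hg (z - x))

lemma negp_nonneg {f : G → ℝ} (hf : ∀ x, 0 ≤ f x) : ∀ x, 0 ≤ negp f x := fun x => hf (-x)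

lemma support_conv_negp {f q : G → ℝ} {Tf Tq : Finset G}
    (hf : Function.support f ⊆ ↑Tf) (hq : Function.support q ⊆ ↑Tq) :
    Function.support (conv f (negp q)) ⊆ ↑(Tf - Tq) := by
  intro z hz
  rw [Function.mem_support, conv_negp_apply] at hz
  have hex : ∃ x, f x * q (x - z) ≠ 0 := by
    by_contra hc; push_neg at hc
    exact hz (finsum_eq_zero_of_forall_eq_zero hc)
  obtain ⟨x, hx⟩ := hex
  have hfx : f x ≠ 0 := fun h0 => hx (by simp [h0])
  have hqx : q (x - z) ≠ 0 := fun h0 => hx (by simp [h0])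
  rw [Finset.coe_sub]
  simpa [sub_sub_cancel] using Set.sub_mem_sub (hf hfx) (hq hqx)

lemma sum_negMulLog_comp_eq_ent {f : G → ℝ} (e : G ≃ G) {T : Finset G}
    (h : ∀ z, f (e z) ≠ 0 → z ∈ T) :
    ∑ z ∈ T, Real.negMulLog (f (e z)) = ent f := by
  have h1 : ∑ z ∈ T, Real.negMulLog (f (e z)) = ∑ᶠ z, Real.negMulLog (f (e z)) := by
    refine (finsum_eq_sum_of_support_subset _ ?_).symm
    intro z hz
    simp only [Function.mem_support] at hz
    have hfz : f (e z) ≠ 0 := fun h0 => hz (by simp [h0, Real.negMulLog])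
    exact h z hfz
  rw [h1, ent_eq_finsum]
  exact finsum_eq_of_bijective e e.bijective fun z => rfl


lemma ent_conv_ge {p q : G → ℝ} (hp : IsPMF p) (hq : IsPMF q) :
    ent p ≤ ent (conv p (negp q)) ∧ ent q ≤ ent (conv p (negp q)) := by
  classical
  obtain ⟨hp0, hpfin, hpsum⟩ := hp
  obtain ⟨hq0, hqfin, hqsum⟩ := hq
  set Fp := hpfin.toFinset with hFp
  set Fq := hqfin.toFinset with hFq
  have hsp : Function.support p ⊆ ↑Fp := by simp [hFp]
  have hsq : Function.support q ⊆ ↑Fq := by simp [hFq]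
  set T := Fp - Fq with hT
  have hsc : Function.support (conv p (negp q)) ⊆ ↑T := support_conv_negp hsp hsq
  have hec : ent (conv p (negp q)) = ∑ z ∈ T, Real.negMulLog (conv p (negp q) z) :=
    ent_eq_sum hsc
  have hpsum' : ∑ x ∈ Fp, p x = 1 := by
    rw [← finsum_eq_sum_of_support_subset _ hsp]; exact hpsum
  have hqsum' : ∑ y ∈ Fq, q y = 1 := by
    rw [← finsum_eq_sum_of_support_subset _ hsq]; exact hqsum
  constructor
  · have jensen : ∀ z ∈ T, ∑ y ∈ Fq, q y * Real.negMulLog (p (z + y))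
        ≤ Real.negMulLog (conv p (negp q) z) := by
      intro z _
      rw [conv_negp_eq_sum' hsq z]
      have := Real.concaveOn_negMulLog.le_map_sum (t := Fq) (w := q) (p := fun y => p (z + y))
        (fun y _ => hq0 y) hqsum' (fun y _ => Set.mem_Ici.2 (hp0 _))
      simpa [smul_eq_mul] using this
    have hinner : ∀ y ∈ Fq, ∑ z ∈ T, Real.negMulLog (p (z + y)) = ent p := by
      intro y hy
      have := sum_negMulLog_comp_eq_ent (f := p) (Equiv.addRight y) (T := T) ?_
      · simpa using this
      · intro z hz
        simp only [Equiv.coe_addRight] at hz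
        have : (z + y) - y ∈ Fp - Fq := Finset.sub_mem_sub (hsp hz) hy
        simpa using this
    calc ent p = ∑ y ∈ Fq, q y * ent p := by rw [← Finset.sum_mul, hqsum', one_mul]
      _ = ∑ y ∈ Fq, q y * ∑ z ∈ T, Real.negMulLog (p (z + y)) := by
          refine Finset.sum_congr rfl fun y hy => ?_
          rw [hinner y hy]
      _ = ∑ z ∈ T, ∑ y ∈ Fq, q y * Real.negMulLog (p (z + y)) := by
          rw [Finset.sum_comm]
          exact Finset.sum_congr rfl fun y _ => by rw [Finset.mul_sum]
      _ ≤ ∑ z ∈ T, Real.negMulLog (conv p (negp q) z) := Finset.sum_le_sum jensen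
      _ = ent (conv p (negp q)) := hec.symm
  · have jensen : ∀ z ∈ T, ∑ x ∈ Fp, p x * Real.negMulLog (q (x - z))
        ≤ Real.negMulLog (conv p (negp q) z) := by
      intro z _
      rw [conv_negp_eq_sum hsp z]
      have := Real.concaveOn_negMulLog.le_map_sum (t := Fp) (w := p) (p := fun x => q (x - z))
        (fun x _ => hp0 x) hpsum' (fun x _ => Set.mem_Ici.2 (hq0 _))
      simpa [smul_eq_mul] using this
    have hinner : ∀ x ∈ Fp, ∑ z ∈ T, Real.negMulLog (q (x - z)) = ent q := by
      intro x hx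
      have := sum_negMulLog_comp_eq_ent (f := q) (Equiv.subLeft x) (T := T) ?_
      · simpa using this
      · intro z hz
        simp only [Equiv.subLeft_apply] at hz
        have : x - (x - z) ∈ Fp - Fq := Finset.sub_mem_sub hx (hsq hz)
        simpa [sub_sub_cancel] using this
    calc ent q = ∑ x ∈ Fp, p x * ent q := by rw [← Finset.sum_mul, hpsum', one_mul]
      _ = ∑ x ∈ Fp, p x * ∑ z ∈ T, Real.negMulLog (q (x - z)) := by
          refine Finset.sum_congr rfl fun x hx => ?_
          rw [hinner x hx]
      _ = ∑ z ∈ T, ∑ x ∈ Fp, p x * Real.negMulLog (q (x - z)) := by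
          rw [Finset.sum_comm]
          exact Finset.sum_congr rfl fun x _ => by rw [Finset.mul_sum]
      _ ≤ ∑ z ∈ T, Real.negMulLog (conv p (negp q) z) := Finset.sum_le_sum jensen
      _ = ent (conv p (negp q)) := hec.symm

lemma rdist_nonneg' {p q : G → ℝ} (hp : IsPMF p) (hq : IsPMF q) : 0 ≤ rdist p q := by
  obtain ⟨h1, h2⟩ := ent_conv_ge hp hq
  simp only [rdist]; linarith

lemma ent_le_of_rdist {p q : G → ℝ} (hp : IsPMF p) (hq : IsPMF q) :
    ent q ≤ ent p + 2 * rdist p q := by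
  obtain ⟨h1, h2⟩ := ent_conv_ge hp hq
  simp only [rdist]; linarith

lemma ent_le_log_card {r : α → ℝ} (hr : IsPMF r) {T : Finset α}
    (h : Function.support r ⊆ ↑T) : ent r ≤ Real.log T.card := by
  classical
  set T' := T.filter (fun x => r x ≠ 0) with hT'
  have hsub : Function.support r ⊆ ↑T' := by
    intro x hx
    simp only [hT', Finset.coe_filter, Set.mem_setOf_eq]
    exact ⟨h hx, hx⟩
  have hsum : ∑ x ∈ T', r x = 1 := hr.sum_one hsub
  have hpos : ∀ x ∈ T', 0 < r x := by
    intro x hx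
    rw [hT', Finset.mem_filter] at hx
    exact lt_of_le_of_ne (hr.1 x) (Ne.symm hx.2)
  have hne : T'.Nonempty := by
    rcases Finset.eq_empty_or_nonempty T' with h0 | h0
    · rw [h0, Finset.sum_empty] at hsum; norm_num at hsum
    · exact h0
  have hcard : 0 < (T.card : ℝ) := by
    have := Finset.card_pos.2 (hne.mono (Finset.filter_subset _ _))
    exact_mod_cast this
  have key : ∀ x ∈ T', Real.negMulLog (r x) - r x * Real.log T.card ≤ 1 / T.card - r x := by
    intro x hx
    have hrx := hpos x hx
    have e1 : Real.negMulLog (r x) - r x * Real.log T.card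
        = r x * Real.log ((T.card : ℝ) * r x)⁻¹ := by
      rw [Real.log_inv, Real.log_mul (ne_of_gt hcard) (ne_of_gt hrx)]
      simp [Real.negMulLog]; ring
    rw [e1]
    have hlog := Real.log_le_sub_one_of_pos (x := ((T.card : ℝ) * r x)⁻¹) (by positivity)
    calc r x * Real.log ((T.card : ℝ) * r x)⁻¹ ≤ r x * (((T.card : ℝ) * r x)⁻¹ - 1) :=
          mul_le_mul_of_nonneg_left hlog hrx.le
      _ = 1 / T.card - r x := by
          field_simp
  have main : ent r - Real.log T.card ≤ 0 := by
    have hsplit : ent r - Real.log T.card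
        = ∑ x ∈ T', (Real.negMulLog (r x) - r x * Real.log T.card) := by
      rw [Finset.sum_sub_distrib, ← Finset.sum_mul, hsum, one_mul, ← ent_eq_sum hsub]
    rw [hsplit]
    calc ∑ x ∈ T', (Real.negMulLog (r x) - r x * Real.log T.card)
        ≤ ∑ x ∈ T', (1 / T.card - r x) := Finset.sum_le_sum key
      _ = T'.card / T.card - 1 := by
          rw [Finset.sum_sub_distrib, hsum, Finset.sum_const, nsmul_eq_mul, mul_one_div]
      _ ≤ 0 := by
          have hle : (T'.card : ℝ) ≤ T.card := by
            exact_mod_cast Finset.card_le_card (Finset.filter_subset _ _)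
          have := div_le_one_of_le₀ hle hcard.le
          linarith
  linarith

end AuxPFR

/-- if `P(X ∈ S) ≥ 1/2`, then for any `Y`,
`log |S| ≥ H(Y) - 4 d[X;Y] - 2 log 2`. -/
theorem log_card_ge_of_prob_half {G : Type*} [AddCommGroup G] (p q : G → ℝ)
    (hp : IsPMF p) (hq : IsPMF q) (S : Set G) (hS : S.Finite)
    (hprob : (1 : ℝ) / 2 ≤ ∑ᶠ x ∈ S, p x) :
    ent q - 4 * rdist p q - 2 * Real.log 2 ≤ Real.log hS.toFinset.card := by
  classical
  have hp' := hp
  obtain ⟨hp0, hpfin, hpsum⟩ := hp'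
  set Fp := hpfin.toFinset with hFp
  have hsp : Function.support p ⊆ ↑Fp := by simp [hFp]
  have hpsum' : ∑ x ∈ Fp, p x = 1 := by
    rw [← finsum_eq_sum_of_support_subset _ hsp]; exact hpsum
  set P := ∑ᶠ x ∈ S, p x with hPdef
  have hPeq : P = ∑ x ∈ Fp, (if x ∈ S then p x else 0) := by
    rw [hPdef, finsum_mem_def]
    rw [finsum_eq_sum_of_support_subset]
    · exact Finset.sum_congr rfl fun x _ => by simp [Set.indicator_apply]
    · intro x hx
      refine hsp ?_
      simp only [Function.mem_support, Set.indicator_apply] at hx ⊢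
      intro h0; exact hx (by split <;> simp [h0])
  have hPhalf : (1:ℝ)/2 ≤ P := hprob
  have hPpos : 0 < P := by linarith
  have hP1 : P ≤ 1 := by
    rw [hPeq, ← hpsum']
    refine Finset.sum_le_sum fun x _ => ?_
    split
    · exact le_refl _
    · exact hp0 x
  set r := fun x => if x ∈ S then p x / P else 0 with hrdef
  have hr0 : ∀ x, 0 ≤ r x := by
    intro x; simp only [hrdef]; split
    · exact div_nonneg (hp0 x) hPpos.le
    · exact le_refl 0
  have hrsupp : Function.support r ⊆ Function.support p := by
    intro x hx
    simp only [Function.mem_support, hrdef] at hx ⊢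
    intro h0; apply hx; split <;> simp [h0]
  have hrsuppFp : Function.support r ⊆ ↑Fp := hrsupp.trans hsp
  have hrsum : ∑ x ∈ Fp, r x = 1 := by
    have hpt : ∀ x, r x = (if x ∈ S then p x else 0) / P := by
      intro x; simp only [hrdef]; split <;> simp
    calc ∑ x ∈ Fp, r x = ∑ x ∈ Fp, (if x ∈ S then p x else 0) / P :=
          Finset.sum_congr rfl fun x _ => hpt x
      _ = P / P := by rw [← Finset.sum_div, ← hPeq]
      _ = 1 := div_self hPpos.ne'
  have hrPMF : IsPMF r := ⟨hr0, hpfin.subset hrsupp, by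
    rw [finsum_eq_sum_of_support_subset _ hrsuppFp]; exact hrsum⟩
  have hrS : Function.support r ⊆ ↑hS.toFinset := by
    intro x hx
    simp only [Function.mem_support, hrdef] at hx
    have hxS : x ∈ S := by by_contra hxS; simp [hxS] at hx
    simpa using hxS
  -- key bound on rdist r q
  have hrq_le : rdist r q ≤ 2 * rdist p q + Real.log 2 := by
    rcases eq_or_lt_of_le hP1 with hP1e | hPlt
    · -- P = 1 : r = p
      have hsum_eq : ∑ x ∈ Fp, (if x ∈ S then p x else 0) = ∑ x ∈ Fp, p x := by
        rw [← hPeq, hpsum', hP1e]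
      have hpe : ∀ x ∈ Fp, (if x ∈ S then p x else 0) = p x :=
        (Finset.sum_eq_sum_iff_of_le (fun x _ => by
          split
          · exact le_refl _
          · exact hp0 x)).1 hsum_eq
      have hre : r = p := by
        funext x
        by_cases hxFp : x ∈ Fp
        · have := hpe x hxFp
          by_cases hxS : x ∈ S
          · simp only [hrdef, if_pos hxS, hP1e, div_one]
          · simp only [if_neg hxS] at this
            simp only [hrdef, if_neg hxS]
            exact this
        · have hpx : p x = 0 := by
            by_contra hpx
            exact hxFp (by simp [hFp, Function.mem_support, hpx])
          simp only [hrdef, hpx]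
          split <;> simp
      rw [hre]
      have h0 := rdist_nonneg' hp hq
      have hl2 : (0:ℝ) ≤ Real.log 2 := Real.log_nonneg (by norm_num)
      linarith
    · -- P < 1
      have hPcpos : 0 < 1 - P := by linarith
      set Pc := 1 - P with hPcdef
      set rc := fun x => if x ∈ S then 0 else p x / Pc with hrcdef
      have hrc0 : ∀ x, 0 ≤ rc x := by
        intro x; simp only [hrcdef]; split
        · exact le_refl 0
        · exact div_nonneg (hp0 x) hPcpos.le
      have hrcsupp : Function.support rc ⊆ Function.support p := by
        intro x hx
        simp only [Function.mem_support, hrcdef] at hx ⊢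
        intro h0; apply hx; split <;> simp [h0]
      have hrcsuppFp : Function.support rc ⊆ ↑Fp := hrcsupp.trans hsp
      have hPcsum : ∑ x ∈ Fp, (if x ∈ S then 0 else p x) = Pc := by
        have : ∑ x ∈ Fp, ((if x ∈ S then p x else 0) + (if x ∈ S then 0 else p x))
            = ∑ x ∈ Fp, p x := Finset.sum_congr rfl fun x _ => by split <;> simp
        rw [Finset.sum_add_distrib, ← hPeq, hpsum'] at this
        rw [hPcdef]; linarith
      have hrcsum : ∑ x ∈ Fp, rc x = 1 := by
        have hpt : ∀ x, rc x = (if x ∈ S then 0 else p x) / Pc := by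
          intro x; simp only [hrcdef]; split <;> simp
        calc ∑ x ∈ Fp, rc x = ∑ x ∈ Fp, (if x ∈ S then 0 else p x) / Pc :=
              Finset.sum_congr rfl fun x _ => hpt x
          _ = Pc / Pc := by rw [← Finset.sum_div, hPcsum]
          _ = 1 := div_self hPcpos.ne'
      have hrcPMF : IsPMF rc := ⟨hrc0, hpfin.subset hrcsupp, by
        rw [finsum_eq_sum_of_support_subset _ hrcsuppFp]; exact hrcsum⟩
      -- pointwise decomposition
      have hsplit_pt : ∀ x, p x = P * r x + Pc * rc x := by
        intro x
        by_cases hxS : x ∈ S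
        · simp only [hrdef, hrcdef, if_pos hxS]
          field_simp
          simp
        · simp only [hrdef, hrcdef, if_neg hxS]
          field_simp
          simp
      -- entropy decomposition
      have hent_pt : ∀ x, Real.negMulLog (p x)
          = P * Real.negMulLog (r x) + Pc * Real.negMulLog (rc x)
            + Real.negMulLog P * r x + Real.negMulLog Pc * rc x := by
        intro x
        by_cases hxS : x ∈ S
        · have hrx : r x = p x / P := by simp [hrdef, hxS]
          have hrcx : rc x = 0 := by simp [hrcdef, hxS]
          have hpx : p x = P * (p x / P) := by field_simp
          calc Real.negMulLog (p x) = Real.negMulLog (P * (p x / P)) := by rw [← hpx]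
            _ = (p x / P) * Real.negMulLog P + P * Real.negMulLog (p x / P) :=
                Real.negMulLog_mul _ _
            _ = _ := by rw [hrx, hrcx]; simp [Real.negMulLog_zero]; ring
        · have hrx : r x = 0 := by simp [hrdef, hxS]
          have hrcx : rc x = p x / Pc := by simp [hrcdef, hxS]
          have hpx : p x = Pc * (p x / Pc) := by field_simp
          calc Real.negMulLog (p x) = Real.negMulLog (Pc * (p x / Pc)) := by rw [← hpx]
            _ = (p x / Pc) * Real.negMulLog Pc + Pc * Real.negMulLog (p x / Pc) :=
                Real.negMulLog_mul _ _
            _ = _ := by rw [hrx, hrcx]; simp [Real.negMulLog_zero]; ring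
      have hent_p_eq : ent p = P * ent r + Pc * ent rc
          + Real.negMulLog P + Real.negMulLog Pc := by
        rw [ent_eq_sum hsp, ent_eq_sum hrsuppFp, ent_eq_sum hrcsuppFp]
        calc ∑ x ∈ Fp, Real.negMulLog (p x)
            = ∑ x ∈ Fp, (P * Real.negMulLog (r x) + Pc * Real.negMulLog (rc x)
              + Real.negMulLog P * r x + Real.negMulLog Pc * rc x) :=
              Finset.sum_congr rfl fun x _ => hent_pt x
          _ = P * ∑ x ∈ Fp, Real.negMulLog (r x) + Pc * ∑ x ∈ Fp, Real.negMulLog (rc x)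
              + Real.negMulLog P * ∑ x ∈ Fp, r x + Real.negMulLog Pc * ∑ x ∈ Fp, rc x := by
              rw [Finset.sum_add_distrib, Finset.sum_add_distrib, Finset.sum_add_distrib,
                Finset.mul_sum, Finset.mul_sum, Finset.mul_sum, Finset.mul_sum]
          _ = _ := by rw [hrsum, hrcsum]; ring
      -- convolution decomposition
      obtain ⟨hq0, hqfin, hqsum⟩ := hq
      set Fq := hqfin.toFinset with hFq
      have hsq : Function.support q ⊆ ↑Fq := by simp [hFq]
      have hq' : IsPMF q := ⟨hq0, hqfin, hqsum⟩
      have hconv_pt : ∀ z, conv p (negp q) z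
          = P * conv r (negp q) z + Pc * conv rc (negp q) z := by
        intro z
        rw [conv_negp_eq_sum hsp z, conv_negp_eq_sum hrsuppFp z, conv_negp_eq_sum hrcsuppFp z,
          Finset.mul_sum, Finset.mul_sum, ← Finset.sum_add_distrib]
        refine Finset.sum_congr rfl fun x _ => ?_
        rw [hsplit_pt x]; ring
      have hsc_p : Function.support (conv p (negp q)) ⊆ ↑(Fp - Fq) :=
        support_conv_negp hsp hsq
      have hsc_r : Function.support (conv r (negp q)) ⊆ ↑(Fp - Fq) :=
        support_conv_negp hrsuppFp hsq
      have hsc_rc : Function.support (conv rc (negp q)) ⊆ ↑(Fp - Fq) :=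
        support_conv_negp hrcsuppFp hsq
      have hconc : P * ent (conv r (negp q)) + Pc * ent (conv rc (negp q))
          ≤ ent (conv p (negp q)) := by
        rw [ent_eq_sum hsc_p, ent_eq_sum hsc_r, ent_eq_sum hsc_rc,
          Finset.mul_sum, Finset.mul_sum, ← Finset.sum_add_distrib]
        refine Finset.sum_le_sum fun z _ => ?_
        have hcc := Real.concaveOn_negMulLog.2
          (Set.mem_Ici.2 (conv_nonneg' hr0 (negp_nonneg hq0) z))
          (Set.mem_Ici.2 (conv_nonneg' hrc0 (negp_nonneg hq0) z))
          hPpos.le hPcpos.le (by rw [hPcdef]; ring)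
        rw [hconv_pt z]
        simpa [smul_eq_mul] using hcc
      have hbin : Real.negMulLog P + Real.negMulLog Pc ≤ Real.log 2 := by
        have hb := Real.binEntropy_le_log_two (p := P)
        rw [Real.binEntropy_eq_negMulLog_add_negMulLog_one_sub] at hb
        rw [hPcdef]; exact hb
      have hrcq0 : (0:ℝ) ≤ Pc * rdist rc q :=
        mul_nonneg hPcpos.le (rdist_nonneg' hrcPMF hq')
      -- linear algebra of entropies
      have hid : P * rdist r q + Pc * rdist rc q
          = (P * ent (conv r (negp q)) + Pc * ent (conv rc (negp q)))
            - (P * ent r + Pc * ent rc) / 2 - (P + Pc) * ent q / 2 := by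
        simp only [rdist]; ring
      have hPP : P + Pc = 1 := by rw [hPcdef]; ring
      have hrd_p : rdist p q = ent (conv p (negp q))
          - (P * ent r + Pc * ent rc + Real.negMulLog P + Real.negMulLog Pc) / 2
          - ent q / 2 := by
        simp only [rdist]; rw [hent_p_eq]
      have hkey : P * rdist r q ≤ rdist p q + Real.log 2 / 2 := by
        rw [hPP] at hid
        clear_value rc
        clear_value r
        clear_value Pc
        clear_value P
        linarith
      have hrq0 : (0:ℝ) ≤ rdist r q := rdist_nonneg' hrPMF hq'
      have hhalf : (1:ℝ)/2 * rdist r q ≤ P * rdist r q :=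
        mul_le_mul_of_nonneg_right hPhalf hrq0
      linarith
  -- assemble
  have h1 : ent q ≤ ent r + 2 * rdist r q := ent_le_of_rdist hrPMF hq
  have h2 : ent r ≤ Real.log hS.toFinset.card := ent_le_log_card hrPMF hrS
  linarith
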